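/- Let g: [0,1] → [0,1] be the sawtooth function g(x) = 2x for x < 1/2 and g(x) = 2(1−x) for x ≥ 1/2 (extended by 0 outside [0,1]), and let g_s denote the s-fold composition of g with itself. Then for every s ≥ 1 and all x ∈ [0,1], g_s(x) = Σ_{k=0}^{2^{s−1}−1} g(2^{s−1}x − k), and for each k ∈ {0,…,2^{s−1}−1} the function x ↦ g(2^{s−1}x − k) is supported in (k/2^{s−1}, (k+1)/2^{s−1}). -/

import Mathlib

open MeasureTheory Matrix

/-- The sawtooth function `g`: `g x = 2 x` for `0 ≤ x < 1/2`, `g x = 2 (1 - x)` for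
`1/2 ≤ x ≤ 1`, and `g x = 0` outside `[0, 1]`. -/
noncomputable def saw (x : ℝ) : ℝ :=
  if x < 0 then 0 else if x < 1/2 then 2 * x else if x ≤ 1 then 2 * (1 - x) else 0

/-- `sawIter s` is the `s`-fold composition `g_s = g ∘ g ∘ ⋯ ∘ g` of the sawtooth function
(with `sawIter 0 = id`, `sawIter 1 = g`). -/
noncomputable def sawIter : ℕ → ℝ → ℝ
  | 0, x => x
  | s + 1, x => saw (sawIter s x)

lemma saw_of_lt_half {x : ℝ} (h0 : 0 ≤ x) (h : x < 1/2) : saw x = 2 * x := by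
  unfold saw; split_ifs <;> linarith

lemma saw_of_ge_half {x : ℝ} (h : 1/2 ≤ x) (h1 : x ≤ 1) : saw x = 2 * (1 - x) := by
  unfold saw; split_ifs <;> linarith

lemma saw_nonpos {x : ℝ} (h : x ≤ 0) : saw x = 0 := by
  unfold saw; split_ifs <;> linarith

lemma saw_one_le {x : ℝ} (h : 1 ≤ x) : saw x = 0 := by
  unfold saw; split_ifs <;> linarith

lemma saw_mem {x : ℝ} (hx : x ∈ Set.Icc (0:ℝ) 1) : saw x ∈ Set.Icc (0:ℝ) 1 := by
  obtain ⟨h0, h1⟩ := hx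
  unfold saw; split_ifs <;> constructor <;> linarith

lemma saw_symm (x : ℝ) : saw (1 - x) = saw x := by
  unfold saw; split_ifs <;> linarith

lemma saw_ne_zero {x : ℝ} (h : saw x ≠ 0) : 0 < x ∧ x < 1 := by
  constructor
  · by_contra h'; push_neg at h'; exact h (saw_nonpos h')
  · by_contra h'; push_neg at h'; exact h (saw_one_le h')

lemma sawIter_comm (n : ℕ) (x : ℝ) : sawIter (n + 1) x = sawIter n (saw x) := by
  induction n with
  | zero => rfl
  | succ n ih =>
    show saw (sawIter (n + 1) x) = saw (sawIter n (saw x))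
    rw [ih]

lemma key (m : ℕ) (hm : 0 < m) {x : ℝ} (hx : x ∈ Set.Icc (0:ℝ) 1) :
    ∑ k ∈ Finset.range m, saw ((m:ℝ) * saw x - k)
      = ∑ k ∈ Finset.range (2 * m), saw (((2 * m : ℕ):ℝ) * x - k) := by
  obtain ⟨h0, h1⟩ := hx
  have hm' : (1:ℝ) ≤ m := by exact_mod_cast hm
  rw [two_mul, Finset.sum_range_add]
  rcases lt_or_ge x (1/2) with h | h
  · rw [saw_of_lt_half h0 h]
    have hz : ∀ k ∈ Finset.range m, saw (((m + m : ℕ):ℝ) * x - (m + k : ℕ)) = 0 := by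
      intro k hk
      apply saw_nonpos
      have hk' : (0:ℝ) ≤ k := Nat.cast_nonneg k
      push_cast
      nlinarith
    rw [Finset.sum_congr rfl hz]
    simp only [Finset.sum_const_zero, add_zero]
    apply Finset.sum_congr rfl
    intro k hk
    congr 1
    push_cast
    ring
  · rw [saw_of_ge_half h h1]
    have hz : ∀ k ∈ Finset.range m, saw (((m + m : ℕ):ℝ) * x - k) = 0 := by
      intro k hk
      apply saw_one_le
      rw [Finset.mem_range] at hk
      have hk' : (k:ℝ) + 1 ≤ m := by exact_mod_cast hk
      push_cast
      nlinarith
    rw [Finset.sum_congr rfl hz]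
    simp only [Finset.sum_const_zero, zero_add]
    rw [← Finset.sum_range_reflect (fun j => saw (((m + m : ℕ):ℝ) * x - ((m + j : ℕ):ℝ))) m]
    apply Finset.sum_congr rfl
    intro k hk
    rw [Finset.mem_range] at hk
    have h1k : k + 1 ≤ m := hk
    have hcast : ((m - 1 - k : ℕ):ℝ) = (m:ℝ) - 1 - k := by
      rw [Nat.sub_sub, Nat.cast_sub (by omega)]
      push_cast
      ring
    show saw ((m:ℝ) * (2 * (1 - x)) - k)
        = saw (((m + m : ℕ):ℝ) * x - ((m + (m - 1 - k) : ℕ):ℝ))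
    have harg : (m:ℝ) * (2 * (1 - x)) - k
        = 1 - (((m + m : ℕ):ℝ) * x - ((m + (m - 1 - k) : ℕ):ℝ)) := by
      push_cast [hcast]
      ring
    rw [harg, saw_symm]

/-- For every `s ≥ 1`, the `s`-fold sawtooth `g_s` satisfies, on `[0,1]`,
`g_s(x) = ∑_{k=0}^{2^{s-1}-1} g(2^{s-1} x - k)`, and each summand `x ↦ g(2^{s-1} x - k)` is
supported in `(k/2^{s-1}, (k+1)/2^{s-1})`. -/
theorem sawtooth_decomposition (s : ℕ) (hs : 1 ≤ s) :
    (∀ x ∈ Set.Icc (0:ℝ) 1,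
      sawIter s x = ∑ k ∈ Finset.range (2^(s-1)), saw ((2:ℝ)^(s-1) * x - k)) ∧
    (∀ k < 2^(s-1),
      Function.support (fun x : ℝ => saw ((2:ℝ)^(s-1) * x - k)) ⊆
        Set.Ioo ((k:ℝ)/2^(s-1)) (((k:ℝ)+1)/2^(s-1))) := by
  constructor
  · induction s, hs using Nat.le_induction with
    | base =>
      intro x hx
      simp [sawIter]
    | succ s hs ih =>
      obtain ⟨t, rfl⟩ : ∃ t, s = t + 1 := ⟨s - 1, (Nat.sub_add_cancel hs).symm⟩
      simp only [Nat.add_sub_cancel] at ih ⊢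
      intro x hx
      have hpow : 2 ^ (t + 1) = 2 * 2 ^ t := by ring
      have hpowR : ((2 * 2 ^ t : ℕ) : ℝ) = (2:ℝ) ^ (t + 1) := by push_cast; ring
      rw [sawIter_comm, ih (saw x) (saw_mem hx)]
      have hcoef : ((2:ℝ) ^ t) = ((2 ^ t : ℕ) : ℝ) := by push_cast; rfl
      rw [hpow, hcoef, key _ (Nat.pow_pos (by norm_num)) hx, hpowR]
  · intro k hk x hx
    simp only [Function.mem_support] at hx
    obtain ⟨h1, h2⟩ := saw_ne_zero hx
    have hp : (0:ℝ) < 2 ^ (s - 1) := by positivity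
    constructor
    · rw [div_lt_iff₀ hp]; linarith [mul_comm x ((2:ℝ)^(s-1))]
    · rw [lt_div_iff₀ hp]; linarith [mul_comm x ((2:ℝ)^(s-1))]
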